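/- Commutation of T with 1 - TT* (Lemma 4.2). Let 0 < q < 1. In the *-algebra X̃⊗Ỹ one has T*T - q² T T* = (1-q²)·(1⊗1); equivalently, with R = TT*, (1-R)T = q² T(1-R) and T*(1-R) = q² (1-R)T*. -/
import Mathlib


open scoped TensorProduct

noncomputable section

/-- the defining relations of the `*`-algebra `X̃`. -/
def XRel (q : ℝ) {A : Type*} [Ring A] [Algebra ℂ A] [StarRing A] (x1 x2 : A) : Prop :=
  x1 * x2 = (q:ℂ) • (x2 * x1) ∧
  star x1 * x2 = (q:ℂ) • (x2 * star x1) ∧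
  star x2 * x2 = ((q:ℂ)^2) • (x2 * star x2) + ((1 - q^2 : ℝ) : ℂ) • (1 : A) ∧
  star x1 * x1 = ((q:ℂ)^2) • (x1 * star x1) + ((1 - q^2 : ℝ) : ℂ) • ((1 : A) - x2 * star x2)

/-- the defining relations of the `*`-algebra `Ỹ`. -/
def YRel (q : ℝ) {B : Type*} [Ring B] [Algebra ℂ B] [StarRing B] (y1 y2 : B) : Prop :=
  y1 * y2 = (q:ℂ) • (y2 * y1) ∧
  star y1 * y2 = (q:ℂ) • (y2 * star y1) ∧
  star y1 * y1 = y1 * star y1 ∧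
  y1 * star y1 + y2 * star y2 = 1 ∧
  ((q:ℂ)^2) • (star y1 * y1) + star y2 * y2 = 1

/-- **Lemma 4.2**: with `T = -q X₁⊗Y₁* + X₂⊗Y₂` and `T* = -q X₁*⊗Y₁ + X₂*⊗Y₂*` in `X̃⊗Ỹ`,
one has `T*T - q² T T* = (1-q²)·(1⊗1)`; equivalently, with `R = TT*`,
`(1-R)T = q² T(1-R)` and `T*(1-R) = q² (1-R)T*`.  (Since `X̃`, `Ỹ` are universal among
complex `*`-algebras with generators satisfying the relations, the identity in `X̃⊗Ỹ` is
equivalent to its validity for all such algebras.) -/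
theorem commutation_T_with_one_sub_R
    (q : ℝ) (hq0 : 0 < q) (hq1 : q < 1)
    {A B : Type*} [Ring A] [Algebra ℂ A] [StarRing A] [StarModule ℂ A]
    [Ring B] [Algebra ℂ B] [StarRing B] [StarModule ℂ B]
    (X1 X2 : A) (Y1 Y2 : B) (hX : XRel q X1 X2) (hY : YRel q Y1 Y2) :
    (((-(q:ℂ)) • (star X1 ⊗ₜ[ℂ] Y1) + star X2 ⊗ₜ[ℂ] star Y2) *
        ((-(q:ℂ)) • (X1 ⊗ₜ[ℂ] star Y1) + X2 ⊗ₜ[ℂ] Y2)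
      - ((q:ℂ)^2) • (((-(q:ℂ)) • (X1 ⊗ₜ[ℂ] star Y1) + X2 ⊗ₜ[ℂ] Y2) *
          ((-(q:ℂ)) • (star X1 ⊗ₜ[ℂ] Y1) + star X2 ⊗ₜ[ℂ] star Y2))
      = ((1 - q^2 : ℝ) : ℂ) • (1 : A ⊗[ℂ] B)) ∧
    ((1 - ((-(q:ℂ)) • (X1 ⊗ₜ[ℂ] star Y1) + X2 ⊗ₜ[ℂ] Y2) *
          ((-(q:ℂ)) • (star X1 ⊗ₜ[ℂ] Y1) + star X2 ⊗ₜ[ℂ] star Y2)) *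
        ((-(q:ℂ)) • (X1 ⊗ₜ[ℂ] star Y1) + X2 ⊗ₜ[ℂ] Y2)
      = ((q:ℂ)^2) • (((-(q:ℂ)) • (X1 ⊗ₜ[ℂ] star Y1) + X2 ⊗ₜ[ℂ] Y2) *
          (1 - ((-(q:ℂ)) • (X1 ⊗ₜ[ℂ] star Y1) + X2 ⊗ₜ[ℂ] Y2) *
            ((-(q:ℂ)) • (star X1 ⊗ₜ[ℂ] Y1) + star X2 ⊗ₜ[ℂ] star Y2)))) ∧
    (((-(q:ℂ)) • (star X1 ⊗ₜ[ℂ] Y1) + star X2 ⊗ₜ[ℂ] star Y2) *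
        (1 - ((-(q:ℂ)) • (X1 ⊗ₜ[ℂ] star Y1) + X2 ⊗ₜ[ℂ] Y2) *
          ((-(q:ℂ)) • (star X1 ⊗ₜ[ℂ] Y1) + star X2 ⊗ₜ[ℂ] star Y2))
      = ((q:ℂ)^2) • ((1 - ((-(q:ℂ)) • (X1 ⊗ₜ[ℂ] star Y1) + X2 ⊗ₜ[ℂ] Y2) *
          ((-(q:ℂ)) • (star X1 ⊗ₜ[ℂ] Y1) + star X2 ⊗ₜ[ℂ] star Y2)) *
          ((-(q:ℂ)) • (star X1 ⊗ₜ[ℂ] Y1) + star X2 ⊗ₜ[ℂ] star Y2))) := by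

  obtain ⟨hx12, hx1s2, hx2s2, hx1s1⟩ := hX
  obtain ⟨hy12, hy1s2, hy1s1, hysum1, hysum2⟩ := hY
  have hq : ((1 - q^2 : ℝ) : ℂ) = 1 - (q:ℂ)^2 := by push_cast; ring
  have hx2s1 : star X2 * X1 = (q:ℂ) • (X1 * star X2) := by
    have := congrArg star hx1s2
    simpa [star_mul, star_smul, Complex.star_def, Complex.conj_ofReal] using this
  have hy2s1s : star Y2 * star Y1 = (q:ℂ) • (star Y1 * star Y2) := by
    have := congrArg star hy12
    simpa [star_mul, star_smul, Complex.star_def, Complex.conj_ofReal] using this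
  have hy22s : Y2 * star Y2 = 1 - Y1 * star Y1 := by
    rw [eq_sub_iff_add_eq, add_comm]; exact hysum1
  have hys22 : star Y2 * Y2 = 1 - ((q:ℂ)^2) • (star Y1 * Y1) := by
    rw [eq_sub_iff_add_eq, add_comm]; exact hysum2
  set T : A ⊗[ℂ] B := (-(q:ℂ)) • (X1 ⊗ₜ[ℂ] star Y1) + X2 ⊗ₜ[ℂ] Y2 with hT
  set S : A ⊗[ℂ] B := (-(q:ℂ)) • (star X1 ⊗ₜ[ℂ] Y1) + star X2 ⊗ₜ[ℂ] star Y2 with hS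
  have key : S * T - ((q:ℂ)^2) • (T * S) = ((1 - q^2 : ℝ) : ℂ) • (1 : A ⊗[ℂ] B) := by
    rw [hT, hS]
    simp only [add_mul, mul_add, smul_mul_assoc, mul_smul_comm,
      Algebra.TensorProduct.tmul_mul_tmul, smul_smul]
    rw [hx1s2, hx2s1, hy12, hy2s1s, hx2s2, hx1s1, hy22s, hys22, ← hy1s1]
    simp only [TensorProduct.add_tmul, TensorProduct.tmul_add, TensorProduct.sub_tmul,
      TensorProduct.tmul_sub, ← TensorProduct.smul_tmul', TensorProduct.tmul_smul,
      smul_add, smul_sub, smul_smul, hq, Algebra.TensorProduct.one_def]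
    module
  have hST : S * T = ((q:ℂ)^2) • (T * S) + (1 - (q:ℂ)^2) • (1 : A ⊗[ℂ] B) := by
    rw [← hq, ← key]; abel
  refine ⟨key, ?_, ?_⟩
  · rw [sub_mul, one_mul, mul_assoc, hST, mul_add, mul_smul_comm, mul_smul_comm, mul_one,
      mul_sub, mul_one, smul_sub]
    module
  · rw [mul_sub, mul_one, ← mul_assoc, hST, add_mul, smul_mul_assoc, smul_mul_assoc, one_mul,
      sub_mul, one_mul, smul_sub]
    module


end
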